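/- Let λ : ℕ⁺ → [0,1] be nonincreasing with λ(1) = 1 and λ(2) < 1. Then there exists a positive integer s with 1 ≤ s ≤ 2·⌈1/(1−λ(2))⌉ − 1 such that λ(s) − λ(s+1) > λ(s+1) − λ(s+2) and λ(s) − λ(s+1) > λ(s+2) − λ(s+3). -/
import Mathlib


/-- Every unit-decreasing OWA function λ has an index s with
1 ≤ s ≤ 2·⌈1/(1−λ(2))⌉ − 1 at which the difference λ(s) − λ(s+1) strictly exceeds both
λ(s+1) − λ(s+2) and λ(s+2) − λ(s+3). -/
theorem stmt7 (lam : ℕ → ℝ) (hlam1 : lam 1 = 1)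
    (hlam01 : ∀ i : ℕ, 1 ≤ i → lam i ∈ Set.Icc (0 : ℝ) 1)
    (hmono : ∀ i j : ℕ, 1 ≤ i → i ≤ j → lam j ≤ lam i)
    (hud : lam 2 < 1) :
    ∃ s : ℕ, 1 ≤ s ∧ s ≤ 2 * ⌈(1 : ℝ) / (1 - lam 2)⌉₊ - 1 ∧
      lam (s + 1) - lam (s + 2) < lam s - lam (s + 1) ∧
      lam (s + 2) - lam (s + 3) < lam s - lam (s + 1) := by
  by_contra hcon
  push_neg at hcon
  set ε : ℝ := 1 - lam 2 with hε
  have hεpos : 0 < ε := by simp [hε]; linarith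
  set k : ℕ := ⌈(1 : ℝ) / ε⌉₊ with hk
  have hkε : (1 : ℝ) ≤ k * ε := by
    have h1 : (1 : ℝ) / ε ≤ k := Nat.le_ceil _
    calc (1 : ℝ) = (1 / ε) * ε := by field_simp
    _ ≤ k * ε := by apply mul_le_mul_of_nonneg_right h1 hεpos.le
  have hk1 : 1 ≤ k := by
    by_contra h
    interval_cases k
    simp at hkε
    linarith
  -- key induction
  have key : ∀ j : ℕ, j ≤ k → ∃ m : ℕ, 1 ≤ m ∧ m ≤ 2 * j + 1 ∧
      ε ≤ lam m - lam (m + 1) ∧ lam m ≤ 1 - j * ε := by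
    intro j
    induction j with
    | zero =>
      intro _
      exact ⟨1, le_refl _, by norm_num, by simp [hε, hlam1], by simp [hlam1]⟩
    | succ j ih =>
      intro hjk
      obtain ⟨m, hm1, hm2, hmd, hml⟩ := ih (Nat.le_of_succ_le hjk)
      have hmle : m ≤ 2 * k - 1 := by omega
      have hc := hcon m hm1 hmle
      have hlsucc : lam (m + 1) ≤ 1 - (j + 1 : ℕ) * ε := by
        push_cast
        have : lam (m+1) ≤ lam m - ε := by linarith
        nlinarith [hml]
      by_cases h1 : lam m - lam (m+1) ≤ lam (m+1) - lam (m+2)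
      · refine ⟨m + 1, by omega, by omega, by linarith, hlsucc⟩
      · push_neg at h1
        have h2 : lam m - lam (m+1) ≤ lam (m+2) - lam (m+3) := by
          by_contra h2
          push_neg at h2
          have := hc h1
          linarith
        have hmono2 : lam (m+2) ≤ lam (m+1) := hmono (m+1) (m+2) (by omega) (by omega)
        refine ⟨m + 2, by omega, by omega, ?_, by linarith⟩
        have : lam (m + 2 + 1) = lam (m + 3) := by ring_nf
        rw [this]; linarith
  obtain ⟨m, hm1, _, hmd, hml⟩ := key k le_rfl
  have h0 : (0 : ℝ) ≤ lam (m + 1) := (hlam01 (m+1) (by omega)).1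
  have : lam m ≤ 0 := by linarith
  linarith
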